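/- In a finite lattice, if an element x satisfies (y ∨ x) ∧ z = y ∨ (x ∧ z) for all cover relations y ⋖ z, then x is left modular, i.e., (y ∨ x) ∧ z = y ∨ (x ∧ z) for all pairs y ≤ z. -/
import Mathlib

/-- If an element `x` of a finite lattice satisfies the left modular identity
`(y ⊔ x) ⊓ z = y ⊔ (x ⊓ z)` for all cover relations `y ⋖ z`, then it satisfies it
for all pairs `y ≤ z`, i.e. `x` is left modular. -/
theorem leftModular_of_covers {L : Type*} [Lattice L] [Fintype L] (x : L)
    (h : ∀ y z : L, y ⋖ z → (y ⊔ x) ⊓ z = y ⊔ (x ⊓ z)) :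
    ∀ y z : L, y ≤ z → (y ⊔ x) ⊓ z = y ⊔ (x ⊓ z) := by
  intro y z hyz
  set a := (y ⊔ x) ⊓ z with ha
  set b := y ⊔ (x ⊓ z) with hb
  have hba : b ≤ a := sup_le (le_inf le_sup_left hyz) (inf_le_inf le_sup_right le_rfl)
  rcases eq_or_lt_of_le hba with heq | hlt
  · exact heq.symm
  obtain ⟨c, hbc, hca⟩ := exists_covBy_le_of_lt hlt
  have hbx : b ⊔ x = y ⊔ x := by
    rw [hb, sup_assoc, sup_comm (x ⊓ z) x, sup_inf_self]
  have hc : (b ⊔ x) ⊓ c = c := by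
    rw [hbx]
    exact inf_eq_right.mpr (hca.trans inf_le_left)
  have hxc : x ⊓ c ≤ b := le_trans (inf_le_inf le_rfl (hca.trans inf_le_right)) le_sup_right
  have := h b c hbc
  rw [hc, sup_eq_left.mpr hxc] at this
  exact absurd this.symm hbc.lt.ne
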